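/- Suppose f and q are twice differentiable real functions with f(x) = (c₁x + c₀)², f never zero and q never zero on the respective domains. Then the expression 4fq²(q'')² − 10fq(q')²q'' + 6f(q')⁴ + 2q⁴(f')²q'' − 3q³(f')²(q')² factors as 2f·(2qq'' − 3(q')²)·(2c₁²q³ + qq'' − (q')²). -/

import Mathlib

theorem stmt_11 (c₀ c₁ : ℝ) (f q : ℝ → ℝ)
    (hf : f = fun x => (c₁ * x + c₀) ^ 2)
    (hf0 : ∀ x, f x ≠ 0) (hq0 : ∀ x, q x ≠ 0)
    (hq1 : Differentiable ℝ q) (hq2 : Differentiable ℝ (deriv q)) :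
    ∀ x y : ℝ,
      4 * f x * (q y) ^ 2 * (deriv (deriv q) y) ^ 2
        - 10 * f x * q y * (deriv q y) ^ 2 * deriv (deriv q) y
        + 6 * f x * (deriv q y) ^ 4
        + 2 * (q y) ^ 4 * (deriv f x) ^ 2 * deriv (deriv q) y
        - 3 * (q y) ^ 3 * (deriv f x) ^ 2 * (deriv q y) ^ 2
      = 2 * f x * (2 * q y * deriv (deriv q) y - 3 * (deriv q y) ^ 2) *
          (2 * c₁ ^ 2 * (q y) ^ 3 + q y * deriv (deriv q) y - (deriv q y) ^ 2) := by
  intro x y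
  have hd : deriv f x = 2 * (c₁ * x + c₀) * c₁ := by
    subst hf
    have h := ((((hasDerivAt_id x).const_mul c₁).add_const c₀).fun_pow 2).deriv
    simpa [mul_comm] using h
  subst hf
  simp only [hd]
  ring
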